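/- Let q = (q_i) and r = (r_i) be two probability distributions over the positive integers with finite support, such that q is nonincreasing (q_i ≥ q_{i+1} for all i ≥ 1). If q is dominated by r, i.e., Σ_{i=1}^ℓ q_i ≤ Σ_{i=1}^ℓ r_i for all ℓ, then the Shannon entropy of q is at least the Shannon entropy of r. -/

import Mathlib

open scoped BigOperators

/-- Domination lemma (inequality part): if `q` is a nonincreasing probability
distribution with finite support dominated by `r`, then `H(q) ≥ H(r)`. -/
theorem stmt_0 (q r : ℕ → ℝ)
    (hq0 : ∀ i, 0 ≤ q i) (hr0 : ∀ i, 0 ≤ r i)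
    (hqfin : (Function.support q).Finite) (hrfin : (Function.support r).Finite)
    (hqsum : ∑ᶠ i, q i = 1) (hrsum : ∑ᶠ i, r i = 1)
    (hmono : ∀ i, q (i + 1) ≤ q i)
    (hdom : ∀ ℓ : ℕ, ∑ i ∈ Finset.range ℓ, q i ≤ ∑ i ∈ Finset.range ℓ, r i) :
    -∑ᶠ i, r i * Real.logb 2 (r i) ≤ -∑ᶠ i, q i * Real.logb 2 (q i) := by
  classical
  have hAnti : Antitone q := antitone_nat_of_succ_le hmono
  -- there is an index with q = 0
  have hex : ∃ i, q i = 0 := by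
    by_contra h
    push_neg at h
    have hu : Function.support q = Set.univ := by
      ext i; simp [Function.mem_support, h i]
    rw [hu] at hqfin
    exact Set.infinite_univ hqfin
  set m := Nat.find hex with hm
  have hqm : q m = 0 := Nat.find_spec hex
  have hqpos : ∀ i < m, 0 < q i := fun i hi =>
    (hq0 i).lt_of_ne' (Nat.find_min hex hi)
  have hqzero : ∀ i, m ≤ i → q i = 0 := fun i hi =>
    le_antisymm (hqm ▸ hAnti hi) (hq0 i)
  -- support of q inside range m
  have hsuppq : Function.support q ⊆ ↑(Finset.range m) := by
    intro i hi
    simp only [Finset.coe_range, Set.mem_Iio]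
    by_contra h
    exact hi (hqzero i (le_of_not_gt h))
  have hq_sum : ∑ i ∈ Finset.range m, q i = 1 := by
    rw [← finsum_eq_sum_of_support_subset q hsuppq]; exact hqsum
  -- the sum of r over any superset of its support is 1
  have hr_big : ∀ s : Finset ℕ, hrfin.toFinset ⊆ s → ∑ i ∈ s, r i = 1 := by
    intro s hs
    rw [← finsum_eq_sum_of_support_subset r (by
      intro i hi
      exact hs (hrfin.mem_toFinset.2 hi))]
    exact hrsum
  have hr_hi : ∑ i ∈ Finset.range m, r i ≤ 1 := by
    have h1 : ∑ i ∈ hrfin.toFinset ∪ Finset.range m, r i = 1 :=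
      hr_big _ Finset.subset_union_left
    calc ∑ i ∈ Finset.range m, r i
        ≤ ∑ i ∈ hrfin.toFinset ∪ Finset.range m, r i :=
          Finset.sum_le_sum_of_subset_of_nonneg Finset.subset_union_right (fun i _ _ => hr0 i)
      _ = 1 := h1
  have hr_sum : ∑ i ∈ Finset.range m, r i = 1 :=
    le_antisymm hr_hi (hq_sum ▸ hdom m)
  -- r vanishes from m on
  have hrzero : ∀ i, m ≤ i → r i = 0 := by
    intro i hi
    by_contra h
    have hri : 0 < r i := (hr0 i).lt_of_ne' h
    set s : Finset ℕ := insert i (hrfin.toFinset ∪ Finset.range m) with hs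
    have h1 : ∑ j ∈ s, r j = 1 :=
      hr_big _ (Finset.subset_union_left.trans (Finset.subset_insert _ _))
    have hins : insert i (Finset.range m) ⊆ s := by
      intro j hj
      rcases Finset.mem_insert.1 hj with rfl | hj
      · exact Finset.mem_insert_self _ _
      · exact Finset.mem_insert_of_mem (Finset.mem_union_right _ hj)
    have h2 : ∑ j ∈ insert i (Finset.range m), r j ≤ 1 := by
      rw [← h1]
      exact Finset.sum_le_sum_of_subset_of_nonneg hins (fun j _ _ => hr0 j)
    rw [Finset.sum_insert (by simp [Nat.not_lt.2 hi]), hr_sum] at h2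
    linarith
  have hsuppr : Function.support r ⊆ ↑(Finset.range m) := by
    intro i hi
    simp only [Finset.coe_range, Set.mem_Iio]
    by_contra h
    exact hi (hrzero i (le_of_not_gt h))
  -- m is positive
  have hm0 : 0 < m := by
    rcases Nat.eq_zero_or_pos m with h | h
    · rw [h] at hq_sum; simp at hq_sum
    · exact h
  -- each q i ≤ 1
  have hq1 : ∀ i < m, q i ≤ 1 := by
    intro i hi
    rw [← hq_sum]
    exact Finset.single_le_sum (fun j _ => hq0 j) (Finset.mem_range.2 hi)
  -- rewrite the finsums as sums over range m
  have hqg : ∑ᶠ i, q i * Real.logb 2 (q i) = ∑ i ∈ Finset.range m, q i * Real.logb 2 (q i) := by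
    apply finsum_eq_sum_of_support_subset
    intro i hi
    apply hsuppq
    intro h0
    apply hi
    simp [h0]
  have hrg : ∑ᶠ i, r i * Real.logb 2 (r i) = ∑ i ∈ Finset.range m, r i * Real.logb 2 (r i) := by
    apply finsum_eq_sum_of_support_subset
    intro i hi
    apply hsuppr
    intro h0
    apply hi
    simp [h0]
  rw [hqg, hrg]
  -- reduce to natural logarithms
  have hlogb : ∀ f : ℕ → ℝ, ∑ i ∈ Finset.range m, f i * Real.logb 2 (f i)
      = (∑ i ∈ Finset.range m, f i * Real.log (f i)) / Real.log 2 := by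
    intro f
    rw [Finset.sum_div]
    exact Finset.sum_congr rfl fun i _ => by rw [Real.logb, mul_div_assoc]
  rw [hlogb q, hlogb r]
  have hlog2 : (0:ℝ) < Real.log 2 := Real.log_pos (by norm_num)
  have key : ∑ i ∈ Finset.range m, q i * Real.log (q i)
      ≤ ∑ i ∈ Finset.range m, r i * Real.log (r i) := by
    -- Step 1 (Abel): ∑ q log q ≤ ∑ r log q
    have habel : ∑ i ∈ Finset.range m, q i * Real.log (q i)
        ≤ ∑ i ∈ Finset.range m, r i * Real.log (q i) := by
      have hd : ∀ ℓ, ∑ j ∈ Finset.range ℓ, (q j - r j) ≤ 0 := by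
        intro ℓ
        rw [Finset.sum_sub_distrib]
        linarith [hdom ℓ]
      have hDm : ∑ j ∈ Finset.range m, (q j - r j) = 0 := by
        rw [Finset.sum_sub_distrib, hq_sum, hr_sum]; ring
      have hparts := Finset.sum_range_by_parts (fun i => Real.log (q i))
        (fun i => q i - r i) m
      simp only [smul_eq_mul] at hparts
      have hterm : ∀ i ∈ Finset.range (m - 1),
          0 ≤ (Real.log (q (i + 1)) - Real.log (q i)) * ∑ j ∈ Finset.range (i + 1), (q j - r j) := by
        intro i hi
        have hi' : i + 1 < m := by
          have := Finset.mem_range.1 hi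
          omega
        have h1 : Real.log (q (i + 1)) ≤ Real.log (q i) :=
          Real.log_le_log (hqpos _ hi') (hmono i)
        nlinarith [hd (i + 1)]
      have hsum : 0 ≤ ∑ i ∈ Finset.range (m - 1),
          (Real.log (q (i + 1)) - Real.log (q i)) * ∑ j ∈ Finset.range (i + 1), (q j - r j) :=
        Finset.sum_nonneg hterm
      have : ∑ i ∈ Finset.range m, Real.log (q i) * (q i - r i) ≤ 0 := by
        rw [hparts, hDm, mul_zero]
        linarith
      have hexp : ∑ i ∈ Finset.range m, Real.log (q i) * (q i - r i)
          = ∑ i ∈ Finset.range m, q i * Real.log (q i)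
            - ∑ i ∈ Finset.range m, r i * Real.log (q i) := by
        rw [← Finset.sum_sub_distrib]
        exact Finset.sum_congr rfl fun i _ => by ring
      linarith [hexp ▸ this]
    -- Step 2 (Gibbs): ∑ r log q ≤ ∑ r log r
    have hgibbs : ∑ i ∈ Finset.range m, r i * Real.log (q i)
        ≤ ∑ i ∈ Finset.range m, r i * Real.log (r i) := by
      have hterm : ∀ i ∈ Finset.range m,
          r i * Real.log (q i) - r i * Real.log (r i) ≤ q i - r i := by
        intro i hi
        rcases eq_or_lt_of_le (hr0 i) with h0 | h0
        · simp [← h0, hq0 i]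
        · have hqi : 0 < q i := hqpos i (Finset.mem_range.1 hi)
          have hx : 0 < q i / r i := div_pos hqi h0
          have hl := Real.log_le_sub_one_of_pos hx
          rw [Real.log_div hqi.ne' h0.ne'] at hl
          have h3 : r i * (Real.log (q i) - Real.log (r i)) ≤ r i * (q i / r i - 1) :=
            mul_le_mul_of_nonneg_left hl h0.le
          have h4 : r i * (q i / r i - 1) = q i - r i := by field_simp
          rw [mul_sub] at h3
          linarith
      have hsum := Finset.sum_le_sum hterm
      rw [Finset.sum_sub_distrib, Finset.sum_sub_distrib, hq_sum, hr_sum] at hsum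
      linarith
    linarith
  apply neg_le_neg
  exact div_le_div_of_nonneg_right key hlog2.le
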